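/- Let G ⊂ Sₙ be a permutation group and let H = S̃¹_{j₁} × ⋯ × S̃^m_{j_m} ⊂ Sₙ be a Young subgroup containing G. Suppose that for every G-invariant multiaffine polynomial f ∈ ℂ[X₁,…,Xₙ] and every x ∈ (int ℍ₊)ⁿ there exist y₁,…,y_m ∈ int ℍ₊ such that f(x) = f(y₁,…,y₁, …, y_m,…,y_m) (with y_j repeated j_j times in the j-th block). Then every G-invariant multiaffine polynomial is H-invariant. -/

import Mathlib

open MvPolynomial

/-- The open upper half-plane is an infinite set. -/
lemma aux_upper_infinite : {z : ℂ | 0 < z.im}.Infinite := by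
  apply Set.infinite_of_injective_forall_mem (f := fun k : ℕ => (k : ℂ) + Complex.I)
  case hi =>
    intro a b hab
    have := congrArg Complex.re hab
    simpa using this
  case hf =>
    intro k
    simp [Complex.add_im]

/-- A complex multivariate polynomial vanishing on the open product of upper
half-planes is zero. -/
lemma aux_vanish : ∀ (n : ℕ) (p : MvPolynomial (Fin n) ℂ),
    (∀ x : Fin n → ℂ, (∀ i, 0 < (x i).im) → MvPolynomial.eval x p = 0) → p = 0 := by
  intro n
  induction n with
  | zero =>
    intro p h
    obtain ⟨c, rfl⟩ := MvPolynomial.C_surjective (Fin 0) p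
    have := h (fun i => i.elim0) (fun i => i.elim0)
    rw [eval_C] at this
    rw [this, map_zero]
  | succ n ih =>
    intro p h
    have hq : finSuccEquiv ℂ n p = 0 := by
      apply Polynomial.ext
      intro k
      rw [Polynomial.coeff_zero]
      apply ih
      intro x hx
      -- the univariate polynomial obtained by specializing the tail variables
      set r : Polynomial ℂ := Polynomial.map (MvPolynomial.eval x) (finSuccEquiv ℂ n p) with hr
      have hr0 : r = 0 := by
        apply Polynomial.eq_zero_of_infinite_isRoot
        apply Set.Infinite.mono (s := {z : ℂ | 0 < z.im}) _ aux_upper_infinite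
        intro z hz
        have hx' : ∀ i, 0 < ((Fin.cons z x : Fin (n+1) → ℂ) i).im := by
          intro i
          refine Fin.cases ?_ ?_ i
          · simpa using hz
          · intro j; simpa using hx j
        have := h (Fin.cons z x) hx'
        rw [eval_eq_eval_mv_eval'] at this
        exact this
      have := congrArg (fun q => Polynomial.coeff q k) hr0
      simpa [hr, Polynomial.coeff_map] using this
    have := congrArg (finSuccEquiv ℂ n).symm hq
    simpa using this

theorem stmt17 (n m : ℕ) (B : Fin n → Fin m) (hmono : Monotone B)
    (hsurj : Function.Surjective B)
    (G : Subgroup (Equiv.Perm (Fin n)))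
    (hGH : ∀ σ ∈ G, ∀ t, B (σ t) = B t)
    (hcoin : ∀ f : MvPolynomial (Fin n) ℂ,
      (∀ σ ∈ G, MvPolynomial.rename (⇑σ) f = f) → (∀ i, f.degreeOf i ≤ 1) →
      ∀ x : Fin n → ℂ, (∀ i, 0 < (x i).im) →
        ∃ y : Fin m → ℂ, (∀ j, 0 < (y j).im) ∧
          MvPolynomial.eval x f = MvPolynomial.eval (fun t => y (B t)) f) :
    ∀ f : MvPolynomial (Fin n) ℂ,
      (∀ σ ∈ G, MvPolynomial.rename (⇑σ) f = f) → (∀ i, f.degreeOf i ≤ 1) →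
      ∀ σ : Equiv.Perm (Fin n), (∀ t, B (σ t) = B t) → MvPolynomial.rename (⇑σ) f = f := by
  intro f hGinv hdeg τ hτ
  classical
  -- the Young subgroup as a finset of permutations
  set HF : Finset (Equiv.Perm (Fin n)) :=
    Finset.univ.filter (fun σ => ∀ t, B (σ t) = B t) with hHF
  have memHF : ∀ σ : Equiv.Perm (Fin n), σ ∈ HF ↔ ∀ t, B (σ t) = B t := by
    intro σ; simp [hHF]
  have mulHF : ∀ ρ σ : Equiv.Perm (Fin n), ρ ∈ HF → σ ∈ HF → ρ * σ ∈ HF := by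
    intro ρ σ hρ hσ
    rw [memHF] at *
    intro t
    simp only [Equiv.Perm.coe_mul, Function.comp_apply]
    rw [hρ (σ t), hσ t]
  have invHF : ∀ σ : Equiv.Perm (Fin n), σ ∈ HF → σ⁻¹ ∈ HF := by
    intro σ hσ
    rw [memHF] at *
    intro t
    have := hσ (σ⁻¹ t)
    rw [Equiv.Perm.coe_inv, Equiv.apply_symm_apply] at this
    exact this.symm
  have oneHF : (1 : Equiv.Perm (Fin n)) ∈ HF := by rw [memHF]; intro t; rfl
  have hτHF : τ ∈ HF := (memHF τ).2 hτ
  have hGHF : ∀ ρ ∈ G, ρ ∈ HF := fun ρ hρ => (memHF ρ).2 (hGH ρ hρ)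
  -- the test polynomial
  set g : MvPolynomial (Fin n) ℂ :=
    ∑ π ∈ HF, (MvPolynomial.rename (⇑π) f - f) with hg
  -- g is multiaffine
  have hdegg : ∀ i, g.degreeOf i ≤ 1 := by
    intro i
    rw [hg]
    apply Finset.sum_induction _ (fun p => MvPolynomial.degreeOf i p ≤ 1)
    · intro a b ha hb
      exact le_trans (MvPolynomial.degreeOf_add_le i a b) (max_le ha hb)
    · simp
    · intro π _
      refine le_trans (MvPolynomial.degreeOf_sub_le i _ _) (max_le ?_ (hdeg i))
      have h1 : MvPolynomial.degreeOf (π (π⁻¹ i)) (MvPolynomial.rename (⇑π) f)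
          = MvPolynomial.degreeOf (π⁻¹ i) f :=
        MvPolynomial.degreeOf_rename_of_injective π.injective (π⁻¹ i)
      rw [Equiv.Perm.coe_inv, Equiv.apply_symm_apply] at h1
      rw [h1]
      exact hdeg _
  -- reindexing lemma: for ρ ∈ HF, renaming by ρ permutes the sum
  have hreindex : ∀ ρ ∈ HF, ∑ π ∈ HF, MvPolynomial.rename (⇑ρ ∘ ⇑π) f
      = ∑ π ∈ HF, MvPolynomial.rename (⇑π) f := by
    intro ρ hρ
    apply Finset.sum_nbij' (fun π => ρ * π) (fun π => ρ⁻¹ * π)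
    · intro π hπ; exact mulHF ρ π hρ hπ
    · intro π hπ; exact mulHF ρ⁻¹ π (invHF ρ hρ) hπ
    · intro π _; simp [mul_assoc]
    · intro π _; simp [← mul_assoc]
    · intro π _
      congr 1
  -- g is G-invariant
  have hginv : ∀ σ ∈ G, MvPolynomial.rename (⇑σ) g = g := by
    intro ρ hρ
    rw [hg, map_sum]
    have : ∀ π ∈ HF, MvPolynomial.rename (⇑ρ) (MvPolynomial.rename (⇑π) f - f)
        = MvPolynomial.rename (⇑ρ ∘ ⇑π) f - f := by
      intro π _
      rw [map_sub, MvPolynomial.rename_rename, hGinv ρ hρ]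
    rw [Finset.sum_congr rfl this, Finset.sum_sub_distrib, hreindex ρ (hGHF ρ hρ),
      ← Finset.sum_sub_distrib]
  -- g vanishes at block-constant points
  have hblock : ∀ y : Fin m → ℂ, MvPolynomial.eval (fun t => y (B t)) g = 0 := by
    intro y
    rw [hg]
    rw [map_sum]
    apply Finset.sum_eq_zero
    intro π hπ
    rw [map_sub, MvPolynomial.eval_rename]
    have : (fun t => y (B t)) ∘ ⇑π = fun t => y (B t) := by
      funext t
      simp only [Function.comp_apply]
      rw [(memHF π).1 hπ t]
    rw [this, sub_self]
  -- hence g vanishes on the open polydisc, so g = 0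
  have hg0 : g = 0 := by
    apply aux_vanish
    intro x hx
    obtain ⟨y, _, hxy⟩ := hcoin g hginv hdegg x hx
    rw [hxy, hblock]
  -- conclude: the HF-symmetrization of f is |HF| • f
  have hF : ∑ π ∈ HF, MvPolynomial.rename (⇑π) f = HF.card • f := by
    rw [hg, Finset.sum_sub_distrib, sub_eq_zero] at hg0
    rw [hg0, Finset.sum_const]
  -- apply rename τ to both sides
  have hτF : HF.card • MvPolynomial.rename (⇑τ) f = HF.card • f := by
    have h1 : MvPolynomial.rename (⇑τ) (∑ π ∈ HF, MvPolynomial.rename (⇑π) f)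
        = ∑ π ∈ HF, MvPolynomial.rename (⇑τ ∘ ⇑π) f := by
      rw [map_sum]
      exact Finset.sum_congr rfl fun π _ => MvPolynomial.rename_rename _ _ f
    calc HF.card • MvPolynomial.rename (⇑τ) f
        = MvPolynomial.rename (⇑τ) (HF.card • f) := by rw [map_nsmul]
      _ = MvPolynomial.rename (⇑τ) (∑ π ∈ HF, MvPolynomial.rename (⇑π) f) := by rw [hF]
      _ = ∑ π ∈ HF, MvPolynomial.rename (⇑π) f := by rw [h1, hreindex τ hτHF]
      _ = HF.card • f := hF
  -- cancel the positive factor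
  have hcard : (HF.card : ℂ) ≠ 0 := by
    have hpos : 0 < HF.card := Finset.card_pos.2 ⟨1, oneHF⟩
    exact_mod_cast hpos.ne'
  have : (HF.card : ℂ) • MvPolynomial.rename (⇑τ) f = (HF.card : ℂ) • f := by
    rw [Nat.cast_smul_eq_nsmul, Nat.cast_smul_eq_nsmul]
    exact hτF
  exact smul_right_injective (MvPolynomial (Fin n) ℂ) hcard this
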